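/- arXiv:2012.06411 — 4 statements merged into one kernel-verified Lean document; each statement's English description precedes it below -/
import Mathlib

section
/- Let X be a real Banach space and F a closed subspace of X such that the quotient X/F is finite-dimensional with dim(X/F) = m ≥ 1. Then there exists a bounded linear projection P : X → X with range contained in F, with P(f) = f for every f ∈ F, and with operator norm ‖P‖ ≤ 1 + 2m. -/
open Module Function

/-- Auerbach's lemma: a finite-dimensional real normed space has a basis of unit vectors
whose coordinate functionals all have norm at most one. -/
lemma auerbach {E : Type*} [NormedAddCommGroup E] [NormedSpace ℝ E]
    [FiniteDimensional ℝ E] {m : ℕ} (hm : 1 ≤ m) (hdim : Module.finrank ℝ E = m) :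
    ∃ z : Basis (Fin m) ℝ E, (∀ i, ‖z i‖ = 1) ∧ ∀ i x, |z.repr x i| ≤ ‖x‖ := by
  haveI : Nontrivial E := nontrivial_of_finrank_pos (R := ℝ) (by omega : 0 < finrank ℝ E)
  classical
  let b : Basis (Fin m) ℝ E := (Module.finBasisOfFinrankEq ℝ E hdim)
  let f : (Fin m → E) → ℝ := fun v => b.det v
  have hf : Continuous f := by
    have : f = fun v => Matrix.det (Matrix.of fun i j => b.repr (v j) i) := by
      funext v
      rw [show f v = b.det v from rfl, b.det_apply]
      congr 1
    rw [this]
    apply Continuous.matrix_det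
    apply continuous_matrix
    intro i j
    exact (b.coord i).continuous_of_finiteDimensional.comp (continuous_apply j)
  let K : Set (Fin m → E) := Set.pi Set.univ fun _ => Metric.sphere (0 : E) 1
  have hK : IsCompact K := isCompact_univ_pi fun _ => isCompact_sphere 0 1
  have hKmem : ∀ {v : Fin m → E}, v ∈ K ↔ ∀ i, ‖v i‖ = 1 := by
    intro v
    simp [K, Set.mem_pi, mem_sphere_iff_norm]
  have hKne : K.Nonempty := by
    obtain ⟨u, hu⟩ := NormedSpace.sphere_nonempty (E := E) (x := 0) (r := 1) |>.2 zero_le_one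
    exact ⟨fun _ => u, hKmem.2 fun _ => by simpa [mem_sphere_iff_norm] using hu⟩
  obtain ⟨e, heK, hemax⟩ := hK.exists_isMaxOn hKne (continuous_abs.comp hf).continuousOn
  have hemax' : ∀ v ∈ K, |f v| ≤ |f e| := fun v hv => hemax hv
  have heunit : ∀ i, ‖e i‖ = 1 := hKmem.1 heK
  -- the maximum is positive
  have hpos : 0 < |f e| := by
    set w : Fin m → E := fun i => ‖b i‖⁻¹ • b i with hw
    have hbne : ∀ i, b i ≠ 0 := fun i => b.ne_zero i
    have hwK : w ∈ K := by
      refine hKmem.2 fun i => ?_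
      rw [hw]
      simp only [norm_smul, norm_inv, norm_norm]
      rw [inv_mul_cancel₀ (norm_ne_zero_iff.2 (hbne i))]
    have hfw : f w = ∏ i, ‖b i‖⁻¹ := by
      have := b.det.toMultilinearMap.map_smul_univ (fun i => ‖b i‖⁻¹) b
      simpa [f, w, b.det_self] using this
    have : f w ≠ 0 := by
      rw [hfw]
      exact Finset.prod_ne_zero_iff.2 fun i _ => inv_ne_zero (norm_ne_zero_iff.2 (hbne i))
    calc 0 < |f w| := abs_pos.2 this
    _ ≤ |f e| := hemax' w hwK
  have hdetne : b.det e ≠ 0 := fun h => by simp [f, h] at hpos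
  obtain ⟨hli, hsp⟩ := (Basis.is_basis_iff_det b).2 (isUnit_iff_ne_zero.2 hdetne)
  let z : Basis (Fin m) ℝ E := Basis.mk hli hsp.ge
  have hz : ∀ i, z i = e i := fun i => by simp [z]
  refine ⟨z, fun i => by rw [hz]; exact heunit i, fun i x => ?_⟩
  -- coordinate bound
  have key : b.det e * z.repr x i = b.det (Function.update e i x) := by
    have := congrFun (congrArg DFunLike.coe
      (b.det_smul_mk_coord_eq_det_update hli hsp.ge i)) x
    simpa [z, Basis.coord_apply] using this
  have hupd : |b.det (Function.update e i x)| ≤ |b.det e| * ‖x‖ := by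
    rcases eq_or_ne x 0 with rfl | hx
    · simp
    · set u : E := ‖x‖⁻¹ • x with hu
      have hxu : x = ‖x‖ • u := by
        rw [hu, smul_smul, mul_inv_cancel₀ (norm_ne_zero_iff.2 hx), one_smul]
      have huK : Function.update e i u ∈ K := by
        refine hKmem.2 fun j => ?_
        rcases eq_or_ne j i with rfl | hj
        · simp only [Function.update_self, hu, norm_smul, norm_inv, norm_norm]
          rw [inv_mul_cancel₀ (norm_ne_zero_iff.2 hx)]
        · rw [Function.update_of_ne hj]; exact heunit j
      have hsmul : b.det (Function.update e i x) = ‖x‖ * b.det (Function.update e i u) := by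
        have h := b.det.toMultilinearMap.map_update_smul e i (‖x‖) u
        rw [smul_eq_mul] at h
        conv_lhs => rw [show Function.update e i x = Function.update e i (‖x‖ • u) from by
          rw [← hxu]]
        exact h
      rw [hsmul, abs_mul, abs_norm, mul_comm (|b.det e|) ‖x‖]
      exact mul_le_mul_of_nonneg_left (hemax' _ huK) (norm_nonneg x)
  have hbound : |b.det e| * |z.repr x i| ≤ |b.det e| * ‖x‖ := by
    calc |b.det e| * |z.repr x i| = |b.det e * z.repr x i| := (abs_mul _ _).symm
    _ = |b.det (Function.update e i x)| := by rw [key]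
    _ ≤ |b.det e| * ‖x‖ := hupd
  exact le_of_mul_le_mul_left hbound hpos

/-- If `F` is a closed subspace of a real Banach space `X` with
`dim (X ⧸ F) = m ≥ 1`, then there is a bounded linear projection `P : X → X` whose range
is contained in `F`, which fixes `F` pointwise, and whose operator norm is at most `1 + 2m`. -/
theorem statement0 {X : Type*} [NormedAddCommGroup X] [NormedSpace ℝ X] [CompleteSpace X]
    (F : Submodule ℝ X) (hFc : IsClosed (F : Set X)) (m : ℕ) (hm : 1 ≤ m)
    [FiniteDimensional ℝ (X ⧸ F)] (hdim : Module.finrank ℝ (X ⧸ F) = m) :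
    ∃ P : X →L[ℝ] X, (∀ x : X, P x ∈ F) ∧ (∀ f ∈ F, P f = f) ∧ ‖P‖ ≤ 1 + 2 * m := by
  haveI : IsClosed (F : Set X) := hFc
  obtain ⟨z, hz1, hzc⟩ := auerbach hm hdim
  -- the quotient map as a continuous linear map, of norm ≤ 1
  let Q : X →L[ℝ] (X ⧸ F) := LinearMap.mkContinuous F.mkQ 1
    (fun x => by simpa using Submodule.Quotient.norm_mk_le F x)
  have hQ : ‖Q‖ ≤ 1 := LinearMap.mkContinuous_norm_le _ zero_le_one _
  have hQapp : ∀ x : X, Q x = Submodule.Quotient.mk x := fun x => rfl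
  -- coordinate functionals as continuous linear maps
  let c : Fin m → (X ⧸ F) →L[ℝ] ℝ := fun i =>
    LinearMap.toContinuousLinearMap (z.coord i)
  have hc : ∀ i, ‖c i‖ ≤ 1 := by
    intro i
    refine ContinuousLinearMap.opNorm_le_bound _ zero_le_one fun v => ?_
    have := hzc i v
    simpa [c, Basis.coord_apply, Real.norm_eq_abs, one_mul] using this
  -- lifts of the basis vectors, of norm < 2
  have hlift : ∀ i : Fin m, ∃ x : X, Submodule.Quotient.mk x = z i ∧ ‖x‖ < 2 := by
    intro i
    obtain ⟨x, hx, hx2⟩ := Submodule.Quotient.norm_mk_lt (z i) one_pos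
    exact ⟨x, hx, by rw [hz1 i] at hx2; linarith⟩
  choose x hx hx2 using hlift
  -- the projection
  let P : X →L[ℝ] X :=
    ContinuousLinearMap.id ℝ X - ∑ i, ((c i).comp Q).smulRight (x i)
  have hPapp : ∀ y : X, P y = y - ∑ i, z.repr (Q y) i • x i := by
    intro y
    simp [P, ContinuousLinearMap.sum_apply, c, Basis.coord_apply]
  refine ⟨P, ?_, ?_, ?_⟩
  · intro y
    rw [← Submodule.Quotient.mk_eq_zero, ← hQapp]
    have : Q (P y) = Q y - ∑ i, z.repr (Q y) i • Q (x i) := by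
      rw [hPapp]
      simp [Finset.smul_sum]
    rw [this]
    have : ∀ i, Q (x i) = z i := fun i => by rw [hQapp, hx]
    simp_rw [this]
    rw [sub_eq_zero]
    exact (z.sum_repr (Q y)).symm
  · intro f hf
    have hQf : Q f = 0 := by
      rw [hQapp, Submodule.Quotient.mk_eq_zero]
      exact hf
    rw [hPapp, hQf]
    simp
  · have hsum : ‖∑ i, ((c i).comp Q).smulRight (x i)‖ ≤ 2 * m := by
      calc ‖∑ i, ((c i).comp Q).smulRight (x i)‖
          ≤ ∑ i : Fin m, ‖((c i).comp Q).smulRight (x i)‖ := norm_sum_le _ _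
        _ ≤ ∑ _i : Fin m, 2 := by
            refine Finset.sum_le_sum fun i _ => ?_
            rw [ContinuousLinearMap.norm_smulRight_apply]
            have h1 : ‖(c i).comp Q‖ ≤ 1 := by
              calc ‖(c i).comp Q‖ ≤ ‖c i‖ * ‖Q‖ := ContinuousLinearMap.opNorm_comp_le _ _
              _ ≤ 1 * 1 := mul_le_mul (hc i) hQ (norm_nonneg Q) zero_le_one
              _ = 1 := one_mul 1
            calc ‖(c i).comp Q‖ * ‖x i‖ ≤ 1 * 2 :=
                  mul_le_mul h1 (hx2 i).le (norm_nonneg _) zero_le_one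
              _ = 2 := one_mul 2
        _ = 2 * m := by simp [mul_comm]
    calc ‖P‖ ≤ ‖ContinuousLinearMap.id ℝ X‖ + ‖∑ i, ((c i).comp Q).smulRight (x i)‖ :=
          norm_sub_le _ _
      _ ≤ 1 + 2 * m := add_le_add ContinuousLinearMap.norm_id_le hsum
end

section
/- For n ≥ 1 let u_n : ℕ≥1 → ℝ be the sequence u_n = 2^{(1−n)/2} Σ_{j=2^{n−1}}^{2^n−1} e_j, where (e_j) is the unit vector basis. Then for every N ≥ 1, the Schreier-2 norm of u_1 + u_2 + ... + u_N equals 1: sup{ (Σ_{j∈A} (Σ_{n=1}^N (u_n)_j)²)^{1/2} : A admissible } = 1. -/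
/-- A finite nonempty set `A` of positive integers is *admissible* if `|A| ≤ min A`.
(Note that `A.card ≤ A.min'` forces every element of `A` to be a positive integer.) -/
def Admissible (A : Finset ℕ) : Prop :=
  ∃ h : A.Nonempty, A.card ≤ A.min' h

/-- The Schreier-2 norm of a sequence: `‖x‖_{S²} = sup { √(∑_{j ∈ A} x_j²) : A admissible }`,
the norm of the 2-convexification `S²` of the Schreier space. -/
noncomputable def schreierTwoNorm (x : ℕ → ℝ) : ℝ :=
  sSup {r : ℝ | ∃ A : Finset ℕ, Admissible A ∧ r = Real.sqrt (∑ j ∈ A, x j ^ 2)}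

/-- The block sequences `u_n = 2^{(1-n)/2} ∑_{j=2^{n-1}}^{2^n - 1} e_j` (for `n ≥ 1`). -/
noncomputable def schreierBlock (n : ℕ) : ℕ → ℝ :=
  fun j => if 2 ^ (n - 1) ≤ j ∧ j ≤ 2 ^ n - 1 then (2 : ℝ) ^ ((1 - (n : ℝ)) / 2) else 0

noncomputable def ww (j : ℕ) : ℝ := (2 : ℝ) ^ (-(Nat.log 2 j : ℝ))

lemma ww_nonneg (j : ℕ) : 0 ≤ ww j := Real.rpow_nonneg (by norm_num) _

lemma ww_antitone : Antitone ww := by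
  intro i j hij
  exact Real.rpow_le_rpow_of_exponent_le one_le_two
    (by exact_mod_cast neg_le_neg (Nat.cast_le.mpr (Nat.log_mono_right hij)))

lemma ww_double (m : ℕ) (hm : 1 ≤ m) : ww (2*m) + ww (2*m+1) = ww m := by
  have hL1 : Nat.log 2 (2*m) = Nat.log 2 m + 1 := by
    rw [mul_comm]; exact Nat.log_mul_base one_lt_two (by omega)
  have hL2 : Nat.log 2 (2*m+1) = Nat.log 2 m + 1 := by
    have h1 : 2 ^ Nat.log 2 m ≤ m := Nat.pow_log_le_self 2 (by omega)
    have h2 : m < 2 ^ (Nat.log 2 m + 1) := Nat.lt_pow_succ_log_self one_lt_two m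
    refine Nat.log_eq_of_pow_le_of_lt_pow ?_ ?_
    · rw [pow_succ]; omega
    · rw [pow_succ, pow_succ]; omega
  unfold ww
  rw [hL1, hL2]
  have : (-(Nat.log 2 m : ℝ)) = (-((Nat.log 2 m + 1 : ℕ) : ℝ)) + 1 := by push_cast; ring
  rw [this, Real.rpow_add_one (by norm_num : (2:ℝ) ≠ 0)]
  ring

lemma sum_ww (m : ℕ) (hm : 1 ≤ m) : ∑ j ∈ Finset.Icc m (2*m-1), ww j = 1 := by
  induction m, hm using Nat.le_induction with
  | base => simp [ww]
  | succ m hm ih =>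
    have h1 : 2*(m+1)-1 = 2*m+1 := by omega
    have h2 : (2*m-1)+1 = 2*m := by omega
    have key : ∑ j ∈ Finset.Icc m (2*m+1), ww j
        = ∑ j ∈ Finset.Icc m (2*m-1), ww j + ww (2*m) + ww (2*m+1) := by
      rw [show 2*m+1 = (2*m)+1 from rfl, Finset.sum_Icc_succ_top (by omega),
        show 2*m = (2*m-1)+1 from h2.symm, Finset.sum_Icc_succ_top (by omega)]
      simp
    have key2 : ∑ j ∈ Finset.Icc m (2*m+1), ww j
        = ww m + ∑ j ∈ Finset.Icc (m+1) (2*m+1), ww j := by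
      rw [← Finset.Ioc_insert_left (by omega : m ≤ 2*m+1), Finset.sum_insert (by simp),
        ← Finset.Icc_add_one_left_eq_Ioc]
    rw [h1]
    have := ww_double m hm
    have hww : ww m ≠ 0 := by unfold ww; positivity
    nlinarith [key, key2, ih, this]

lemma sum_ww_le (k : ℕ) : ∀ A : Finset ℕ, A.card = k → ∀ c : ℕ, (∀ j ∈ A, c ≤ j) →
    (∑ j ∈ A, ww j) ≤ ∑ i ∈ Finset.range k, ww (c + i) := by
  induction k with
  | zero => intro A hA c _; rw [Finset.card_eq_zero.mp hA]; simp
  | succ k ih =>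
    intro A hA c hc
    have hne : A.Nonempty := Finset.card_pos.mp (by omega)
    set M := A.max' hne with hM
    have hMem : M ∈ A := A.max'_mem hne
    have hsub : A ⊆ Finset.Icc c M := by
      intro j hj
      exact Finset.mem_Icc.mpr ⟨hc j hj, A.le_max' j hj⟩
    have hcard : A.card ≤ M + 1 - c := by
      have := Finset.card_le_card hsub
      rwa [Nat.card_Icc] at this
    have hcM : c ≤ M := hc M hMem
    have hMk : c + k ≤ M := by omega
    have hsplit : ∑ j ∈ A, ww j = ww M + ∑ j ∈ A.erase M, ww j :=
      (Finset.add_sum_erase _ _ hMem).symm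
    have herase : (A.erase M).card = k := by
      rw [Finset.card_erase_of_mem hMem, hA]; omega
    have hIH := ih (A.erase M) herase c (fun j hj => hc j (Finset.mem_of_mem_erase hj))
    rw [hsplit, Finset.sum_range_succ]
    have : ww M ≤ ww (c + k) := ww_antitone hMk
    linarith

lemma block_vanish (N j n : ℕ) (hn : n ∈ Finset.Icc 1 N) (hne : n ≠ Nat.log 2 j + 1) :
    schreierBlock n j = 0 := by
  simp only [Finset.mem_Icc] at hn
  unfold schreierBlock
  rw [if_neg]
  rintro ⟨h1, h2⟩
  have hpos : 0 < 2 ^ n := Nat.pow_pos (by norm_num)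
  have hlt : j < 2 ^ n := by omega
  have : Nat.log 2 j = n - 1 := by
    refine Nat.log_eq_of_pow_le_of_lt_pow h1 ?_
    rwa [show n - 1 + 1 = n by omega]
  omega

lemma xsq_le (N j : ℕ) (hj : 1 ≤ j) :
    (∑ n ∈ Finset.Icc 1 N, schreierBlock n j) ^ 2 ≤ ww j := by
  set L := Nat.log 2 j with hL
  by_cases hc : L + 1 ≤ N
  · have hmem : L + 1 ∈ Finset.Icc 1 N := Finset.mem_Icc.mpr ⟨by omega, hc⟩
    rw [Finset.sum_eq_single_of_mem (L+1) hmem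
      (fun n hn hne => block_vanish N j n hn hne)]
    have hcond : 2 ^ (L + 1 - 1) ≤ j ∧ j ≤ 2 ^ (L+1) - 1 := by
      constructor
      · simpa using Nat.pow_log_le_self 2 (by omega)
      · have := Nat.lt_pow_succ_log_self one_lt_two j
        rw [← hL] at this
        omega
    unfold schreierBlock
    rw [if_pos hcond]
    have : ((2:ℝ) ^ ((1 - ((L+1:ℕ):ℝ)) / 2)) ^ 2 = ww j := by
      rw [pow_two, ← Real.rpow_add (by norm_num : (0:ℝ) < 2)]
      unfold ww
      congr 1
      push_cast
      ring
    rw [this]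
  · have : ∑ n ∈ Finset.Icc 1 N, schreierBlock n j = 0 := by
      refine Finset.sum_eq_zero fun n hn => ?_
      refine block_vanish N j n hn ?_
      simp only [Finset.mem_Icc] at hn
      omega
    rw [this]
    simpa using ww_nonneg j

lemma main_upper (N : ℕ) (A : Finset ℕ) (hA : Admissible A) :
    ∑ j ∈ A, (∑ n ∈ Finset.Icc 1 N, schreierBlock n j) ^ 2 ≤ 1 := by
  obtain ⟨hne, hcard⟩ := hA
  set m := A.min' hne with hm
  have hm1 : 1 ≤ m := le_trans (by simpa using Finset.card_pos.mpr hne) hcard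
  have hjm : ∀ j ∈ A, m ≤ j := fun j hj => A.min'_le j hj
  have step1 : ∑ j ∈ A, (∑ n ∈ Finset.Icc 1 N, schreierBlock n j) ^ 2 ≤ ∑ j ∈ A, ww j :=
    Finset.sum_le_sum fun j hj => xsq_le N j (le_trans hm1 (hjm j hj))
  have step2 : ∑ j ∈ A, ww j ≤ ∑ i ∈ Finset.range A.card, ww (m + i) :=
    sum_ww_le A.card A rfl m hjm
  have step3 : ∑ i ∈ Finset.range A.card, ww (m + i) ≤ ∑ i ∈ Finset.range m, ww (m + i) :=
    Finset.sum_le_sum_of_subset_of_nonneg (Finset.range_subset_range.mpr hcard)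
      (fun i _ _ => ww_nonneg _)
  have step4 : ∑ i ∈ Finset.range m, ww (m + i) = ∑ j ∈ Finset.Icc m (2*m-1), ww j := by
    rw [show 2*m-1 = (2*m-1+1)-1 by omega, ← Finset.Ico_add_one_right_eq_Icc,
      show 2*m-1+1 = 2*m by omega, Finset.sum_Ico_eq_sum_range,
      show 2*m-1+1 - m = m by omega]
  have := sum_ww m hm1
  linarith

lemma x_one (N : ℕ) (hN : 1 ≤ N) : ∑ n ∈ Finset.Icc 1 N, schreierBlock n 1 = 1 := by
  rw [Finset.sum_eq_single_of_mem 1 (Finset.mem_Icc.mpr ⟨le_refl 1, hN⟩)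
    (fun n hn hne => block_vanish N 1 n hn (by simpa using hne))]
  unfold schreierBlock
  rw [if_pos (by norm_num)]
  norm_num

/-- For every `N ≥ 1`, the Schreier-2 norm of `u_1 + ⋯ + u_N` equals `1`. -/
theorem statement6 (N : ℕ) (hN : 1 ≤ N) :
    schreierTwoNorm (fun j => ∑ n ∈ Finset.Icc 1 N, schreierBlock n j) = 1 := by
  have hadm : Admissible {1} := ⟨Finset.singleton_nonempty 1, by simp⟩
  have hval : Real.sqrt (∑ j ∈ ({1} : Finset ℕ),
      (∑ n ∈ Finset.Icc 1 N, schreierBlock n j) ^ 2) = 1 := by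
    rw [Finset.sum_singleton, x_one N hN]
    norm_num
  have hmem : (1:ℝ) ∈ {r : ℝ | ∃ A : Finset ℕ, Admissible A ∧
      r = Real.sqrt (∑ j ∈ A, (∑ n ∈ Finset.Icc 1 N, schreierBlock n j) ^ 2)} :=
    ⟨{1}, hadm, hval.symm⟩
  have hub : ∀ r ∈ {r : ℝ | ∃ A : Finset ℕ, Admissible A ∧
      r = Real.sqrt (∑ j ∈ A, (∑ n ∈ Finset.Icc 1 N, schreierBlock n j) ^ 2)}, r ≤ 1 := by
    rintro r ⟨A, hA, rfl⟩
    exact Real.sqrt_le_one.mpr (main_upper N A hA)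
  unfold schreierTwoNorm
  exact le_antisymm (csSup_le ⟨1, hmem⟩ hub) (le_csSup ⟨1, hub⟩ hmem)
end

section
/- For n ≥ 1 let u_n : ℕ≥1 → ℝ be the sequence u_n = 2^{(1−n)/2} Σ_{j=2^{n−1}}^{2^n−1} e_j, where (e_j) is the unit vector basis. Then for every N ≥ 1 and all nonnegative reals λ_1, ..., λ_N, sup{ Σ_j (Σ_{n=1}^N λ_n (u_n)_j) x_j : x finitely supported, ‖x‖_{S²} ≤ 1 } = Σ_{n=1}^N λ_n. In particular the functional norm of Σ_{n=1}^N λ_n u_n on the space normed by ‖·‖_{S²} equals Σ_{n=1}^N λ_n. -/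
open Finset Real

lemma block_unique {m m' j : ℕ} (h1 : 2^(m-1) ≤ j) (h4 : j ≤ 2^m' - 1)
    (h3 : 2^(m'-1) ≤ j) (h2 : j ≤ 2^m - 1) : m = m' := by
  have p1 : (1:ℕ) ≤ 2^m := Nat.one_le_two_pow
  have p2 : (1:ℕ) ≤ 2^m' := Nat.one_le_two_pow
  have h5 : 2^(m-1) < 2^m' := by omega
  have h6 : 2^(m'-1) < 2^m := by omega
  have q1 := (Nat.pow_lt_pow_iff_right (a := 2) (by norm_num)).1 h5
  have q2 := (Nat.pow_lt_pow_iff_right (a := 2) (by norm_num)).1 h6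
  omega

lemma csq (n : ℕ) : ((2:ℝ) ^ ((1 - (n:ℝ))/2))^2 = (2:ℝ)^(1 - (n:ℝ)) := by
  rw [← Real.rpow_natCast ((2:ℝ) ^ ((1 - (n:ℝ))/2)) 2, ← Real.rpow_mul (by norm_num)]
  norm_num

lemma card_block (n : ℕ) (hn : 1 ≤ n) :
    (Finset.Icc (2^(n-1)) (2^n - 1)).card = 2^(n-1) := by
  obtain ⟨k, rfl⟩ : ∃ k, n = k + 1 := ⟨n - 1, by omega⟩
  rw [Nat.card_Icc]
  have h1 : (1:ℕ) ≤ 2^k := Nat.one_le_two_pow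
  have : 2^(k+1) = 2 * 2^k := by ring
  simp only [Nat.add_sub_cancel]
  omega

lemma sumBsq (n : ℕ) (hn : 1 ≤ n) :
    ∑ j ∈ Finset.Icc (2^(n-1)) (2^n - 1), (schreierBlock n j)^2 = 1 := by
  rw [Finset.sum_congr rfl (fun j hj => by
    simp only [schreierBlock, Finset.mem_Icc] at hj ⊢
    rw [if_pos hj, csq])]
  rw [Finset.sum_const, card_block n hn, nsmul_eq_mul]
  have : ((2^(n-1) : ℕ) : ℝ) = (2:ℝ) ^ ((n:ℝ) - 1) := by
    push_cast
    rw [← Real.rpow_natCast (2:ℝ) (n-1)]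
    congr 1
    push_cast [Nat.cast_sub hn]
    ring
  rw [this, ← Real.rpow_add (by norm_num)]
  norm_num

lemma block_nonempty (n : ℕ) (hn : 1 ≤ n) :
    (Finset.Icc (2^(n-1)) (2^n - 1)).Nonempty := by
  rw [← Finset.card_pos, card_block n hn]
  positivity

lemma block_admissible (n : ℕ) (hn : 1 ≤ n) :
    Admissible (Finset.Icc (2^(n-1)) (2^n - 1)) := by
  refine ⟨block_nonempty n hn, ?_⟩
  rw [card_block n hn]
  have := Finset.min'_mem _ (block_nonempty n hn)
  exact (Finset.mem_Icc.1 this).1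

lemma schreier_set_nonempty (x : ℕ → ℝ) :
    {r : ℝ | ∃ A : Finset ℕ, Admissible A ∧ r = Real.sqrt (∑ j ∈ A, x j ^ 2)}.Nonempty := by
  refine ⟨Real.sqrt (∑ j ∈ ({1} : Finset ℕ), x j ^ 2), ⟨{1}, ⟨⟨Finset.singleton_nonempty 1, by simp⟩, rfl⟩⟩⟩

lemma schreier_bddAbove (x : ℕ → ℝ) (hx : (Function.support x).Finite) :
    BddAbove {r : ℝ | ∃ A : Finset ℕ, Admissible A ∧ r = Real.sqrt (∑ j ∈ A, x j ^ 2)} := by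
  refine ⟨Real.sqrt (∑ j ∈ hx.toFinset, x j ^ 2), ?_⟩
  rintro r ⟨A, _, rfl⟩
  apply Real.sqrt_le_sqrt
  have e1 : ∑ j ∈ A, x j ^ 2 = ∑ j ∈ A ∩ hx.toFinset, x j ^ 2 := by
    refine (Finset.sum_subset Finset.inter_subset_left ?_).symm
    intro j hj hj2
    have : x j = 0 := by
      by_contra h
      exact hj2 (Finset.mem_inter.2 ⟨hj, hx.mem_toFinset.2 h⟩)
    rw [this]; ring
  rw [e1]
  exact Finset.sum_le_sum_of_subset_of_nonneg Finset.inter_subset_right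
    (fun j _ _ => by positivity)

lemma sq_sum_le_one (x : ℕ → ℝ) (hx : (Function.support x).Finite)
    (hnorm : schreierTwoNorm x ≤ 1) (A : Finset ℕ) (hA : Admissible A) :
    ∑ j ∈ A, x j ^ 2 ≤ 1 := by
  have h1 : Real.sqrt (∑ j ∈ A, x j ^ 2) ≤ 1 := by
    refine le_trans ?_ hnorm
    exact le_csSup (schreier_bddAbove x hx) ⟨A, hA, rfl⟩
  have h2 : (0:ℝ) ≤ ∑ j ∈ A, x j ^ 2 := by positivity
  nlinarith [Real.sq_sqrt h2, Real.sqrt_nonneg (∑ j ∈ A, x j ^ 2)]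

lemma pairing_le (n : ℕ) (hn : 1 ≤ n) (x : ℕ → ℝ) (hx : (Function.support x).Finite)
    (hnorm : schreierTwoNorm x ≤ 1) :
    ∑ j ∈ Finset.Icc (2^(n-1)) (2^n - 1), schreierBlock n j * x j ≤ 1 := by
  set B := Finset.Icc (2^(n-1)) (2^n - 1) with hB
  calc ∑ j ∈ B, schreierBlock n j * x j
      ≤ Real.sqrt (∑ j ∈ B, (schreierBlock n j)^2) * Real.sqrt (∑ j ∈ B, x j ^ 2) :=
        Real.sum_mul_le_sqrt_mul_sqrt _ _ _
    _ ≤ 1 := by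
        rw [sumBsq n hn, Real.sqrt_one, one_mul]
        rw [show (1:ℝ) = Real.sqrt 1 by simp]
        exact Real.sqrt_le_sqrt (sq_sum_le_one x hx hnorm _ (block_admissible n hn))

noncomputable def w (N : ℕ) : ℕ → ℝ := fun j => ∑ n ∈ Finset.Icc 1 N, schreierBlock n j

lemma w_eq_block {N n j : ℕ} (hn : n ∈ Finset.Icc 1 N) (h1 : 2^(n-1) ≤ j) (h2 : j ≤ 2^n - 1) :
    w N j = schreierBlock n j := by
  refine Finset.sum_eq_single n (fun m hm hmn => ?_) (fun h => absurd hn h)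
  simp only [schreierBlock, ite_eq_right_iff, and_imp]
  intro g1 g2
  exact absurd (block_unique g1 h2 h1 g2) hmn

lemma w_cases {N j : ℕ} (h : w N j ≠ 0) :
    ∃ n ∈ Finset.Icc 1 N, 2^(n-1) ≤ j ∧ j ≤ 2^n - 1 ∧
      w N j = (2:ℝ) ^ ((1 - (n:ℝ))/2) := by
  obtain ⟨n, hn, hne⟩ := Finset.exists_ne_zero_of_sum_ne_zero h
  simp only [schreierBlock, ne_eq, ite_eq_right_iff, not_forall] at hne
  obtain ⟨⟨g1, g2⟩, -⟩ := hne
  refine ⟨n, hn, g1, g2, ?_⟩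
  rw [w_eq_block hn g1 g2]
  simp only [schreierBlock, if_pos (And.intro g1 g2)]

lemma w_support (N : ℕ) : (Function.support (w N)).Finite := by
  apply Set.Finite.subset (Set.finite_Icc 0 (2^N))
  intro j hj
  obtain ⟨n, hn, -, h2, -⟩ := w_cases hj
  simp only [Finset.mem_Icc] at hn
  have : 2^n ≤ 2^N := Nat.pow_le_pow_right (by norm_num) hn.2
  have h1 : (1:ℕ) ≤ 2^n := Nat.one_le_two_pow
  simp only [Set.mem_Icc]
  omega

lemma w_sq_le (N : ℕ) (A : Finset ℕ) (hA : Admissible A) :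
    ∑ j ∈ A, (w N j)^2 ≤ 1 := by
  obtain ⟨hne, hcard⟩ := hA
  set a := A.min' hne with ha
  have ha1 : 1 ≤ a := le_trans (Finset.card_pos.2 hne) hcard
  set n := Nat.log 2 a + 1 with hn
  have hn1 : 1 ≤ n := by omega
  have hlow : 2^(n-1) ≤ a := by
    rw [hn]
    simpa using Nat.pow_log_le_self 2 (by omega : a ≠ 0)
  have hhigh : a < 2^n := Nat.lt_pow_succ_log_self (by norm_num) a
  have key : ∀ j ∈ A, (w N j)^2 ≤ (2:ℝ)^(-(n:ℝ)) + (if j < 2^n then (2:ℝ)^(-(n:ℝ)) else 0) := by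
    intro j hj
    have hja : a ≤ j := Finset.min'_le A j hj
    by_cases h0 : w N j = 0
    · rw [h0]
      have z : (0:ℝ)^2 = 0 := by ring
      rw [z]
      split_ifs <;> positivity
    obtain ⟨m, hm, g1, g2, geq⟩ := w_cases h0
    have p2m : (1:ℕ) ≤ 2^m := Nat.one_le_two_pow
    rw [geq, csq]
    by_cases hcase : j < 2^n
    · have hmn : m = n := by
        have e1 : 2^(m-1) < 2^n := lt_of_le_of_lt g1 hcase
        have e2 : 2^(n-1) < 2^m := by omega
        have q1 := (Nat.pow_lt_pow_iff_right (a := 2) (by norm_num)).1 e1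
        have q2 := (Nat.pow_lt_pow_iff_right (a := 2) (by norm_num)).1 e2
        omega
      rw [if_pos hcase, ← hmn,
        show (1:ℝ) - (m:ℝ) = -(m:ℝ) + 1 by ring, Real.rpow_add (by norm_num), Real.rpow_one]
      ring_nf
      rfl
    · have hm1 : n + 1 ≤ m := by
        have e2 : 2^n < 2^m := by omega
        have q2 := (Nat.pow_lt_pow_iff_right (a := 2) (by norm_num)).1 e2
        omega
      rw [if_neg hcase, add_zero]
      apply Real.rpow_le_rpow_of_exponent_le (by norm_num)
      have : (n:ℝ) + 1 ≤ (m:ℝ) := by exact_mod_cast hm1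
      linarith
  have hcf : (A.filter (fun j => j < 2^n)).card ≤ 2^n - a := by
    have hsub : A.filter (fun j => j < 2^n) ⊆ Finset.Icc a (2^n - 1) := by
      intro j hj
      simp only [Finset.mem_filter] at hj
      exact Finset.mem_Icc.2 ⟨Finset.min'_le A j hj.1, by omega⟩
    have := Finset.card_le_card hsub
    rw [Nat.card_Icc] at this
    omega
  calc ∑ j ∈ A, (w N j)^2
      ≤ ∑ j ∈ A, ((2:ℝ)^(-(n:ℝ)) + (if j < 2^n then (2:ℝ)^(-(n:ℝ)) else 0)) :=
        Finset.sum_le_sum key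
    _ = (A.card : ℝ) * (2:ℝ)^(-(n:ℝ))
        + ((A.filter (fun j => j < 2^n)).card : ℝ) * (2:ℝ)^(-(n:ℝ)) := by
        rw [Finset.sum_add_distrib, Finset.sum_const, ← Finset.sum_filter, Finset.sum_const]
        simp [nsmul_eq_mul]
    _ ≤ (a:ℝ) * (2:ℝ)^(-(n:ℝ)) + (((2^n - a : ℕ)):ℝ) * (2:ℝ)^(-(n:ℝ)) := by
        have c1 : (A.card : ℝ) ≤ (a:ℝ) := by exact_mod_cast hcard
        have c2 : ((A.filter (fun j => j < 2^n)).card : ℝ) ≤ (((2^n - a : ℕ)):ℝ) := by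
          exact_mod_cast hcf
        have tpos : (0:ℝ) ≤ (2:ℝ)^(-(n:ℝ)) := by positivity
        exact add_le_add (mul_le_mul_of_nonneg_right c1 tpos)
          (mul_le_mul_of_nonneg_right c2 tpos)
    _ = 1 := by
        rw [← add_mul]
        push_cast [Nat.cast_sub hhigh.le]
        have e : (a:ℝ) + ((2:ℝ)^n - (a:ℝ)) = (2:ℝ)^n := by ring
        rw [e, ← Real.rpow_natCast (2:ℝ) n, ← Real.rpow_add (by norm_num)]
        have e2 : (n:ℝ) + -(((Nat.log 2 a : ℕ):ℝ) + 1) = 0 := by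
          rw [hn]; push_cast; ring
        rw [add_neg_cancel, Real.rpow_zero]

lemma w_norm_le (N : ℕ) : schreierTwoNorm (w N) ≤ 1 := by
  apply csSup_le (schreier_set_nonempty (w N))
  rintro r ⟨A, hA, rfl⟩
  rw [show (1:ℝ) = Real.sqrt 1 by simp]
  exact Real.sqrt_le_sqrt (w_sq_le N A hA)

lemma sum_to_block (N n : ℕ) (x : ℕ → ℝ) (s : Finset ℕ)
    (hs : ∀ j ∉ s, x j = 0) :
    ∑ j ∈ s, schreierBlock n j * x j
      = ∑ j ∈ Finset.Icc (2^(n-1)) (2^n - 1), schreierBlock n j * x j := by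
  set B := Finset.Icc (2^(n-1)) (2^n - 1) with hB
  have e1 : ∑ j ∈ s, schreierBlock n j * x j = ∑ j ∈ s ∪ B, schreierBlock n j * x j :=
    Finset.sum_subset Finset.subset_union_left
      (fun j _ hj => by rw [hs j hj, mul_zero])
  have e2 : ∑ j ∈ B, schreierBlock n j * x j = ∑ j ∈ s ∪ B, schreierBlock n j * x j :=
    Finset.sum_subset Finset.subset_union_right
      (fun j _ hj => by
        have : schreierBlock n j = 0 := by
          simp only [hB, Finset.mem_Icc, not_and_or, not_le] at hj
          simp only [schreierBlock, ite_eq_right_iff, and_imp]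
          intro g1 g2
          omega
        rw [this, zero_mul])
  rw [e1, ← e2]

lemma elem_le (N : ℕ) (lam : ℕ → ℝ) (hlam : ∀ n, 0 ≤ lam n) (x : ℕ → ℝ)
    (hfin : (Function.support x).Finite) (hnorm : schreierTwoNorm x ≤ 1) :
    ∑' j, (∑ n ∈ Finset.Icc 1 N, lam n * schreierBlock n j) * x j
      ≤ ∑ n ∈ Finset.Icc 1 N, lam n := by
  have hs : ∀ j ∉ hfin.toFinset, x j = 0 := by
    intro j hj
    by_contra h
    exact hj (hfin.mem_toFinset.2 h)
  rw [tsum_eq_sum (s := hfin.toFinset) (fun j hj => by rw [hs j hj, mul_zero])]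
  simp_rw [Finset.sum_mul]
  rw [Finset.sum_comm]
  apply Finset.sum_le_sum
  intro n hn
  simp_rw [mul_assoc]
  rw [← Finset.mul_sum, sum_to_block N n x _ hs]
  exact mul_le_of_le_one_right (hlam n)
    (pairing_le n (Finset.mem_Icc.1 hn).1 x hfin hnorm)

lemma w_tsum (N : ℕ) (lam : ℕ → ℝ) :
    ∑' j, (∑ n ∈ Finset.Icc 1 N, lam n * schreierBlock n j) * w N j
      = ∑ n ∈ Finset.Icc 1 N, lam n := by
  have hs : ∀ j ∉ (w_support N).toFinset, w N j = 0 := by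
    intro j hj
    by_contra h
    exact hj ((w_support N).mem_toFinset.2 h)
  rw [tsum_eq_sum (s := (w_support N).toFinset) (fun j hj => by rw [hs j hj, mul_zero])]
  simp_rw [Finset.sum_mul]
  rw [Finset.sum_comm]
  apply Finset.sum_congr rfl
  intro n hn
  simp_rw [mul_assoc]
  rw [← Finset.mul_sum, sum_to_block N n (w N) _ hs]
  have : ∑ j ∈ Finset.Icc (2^(n-1)) (2^n - 1), schreierBlock n j * w N j
      = ∑ j ∈ Finset.Icc (2^(n-1)) (2^n - 1), (schreierBlock n j)^2 := by
    apply Finset.sum_congr rfl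
    intro j hj
    rw [Finset.mem_Icc] at hj
    rw [w_eq_block hn hj.1 hj.2]
    ring
  rw [this, sumBsq n (Finset.mem_Icc.1 hn).1, mul_one]

/-- For every `N ≥ 1` and nonnegative reals `λ_1, …, λ_N`, the norm of
`∑_{n=1}^N λ_n u_n` as a functional on the space normed by `‖·‖_{S²}` equals `∑_{n=1}^N λ_n`:
the supremum of `∑_j (∑_{n=1}^N λ_n (u_n)_j) x_j` over finitely supported `x` with
`‖x‖_{S²} ≤ 1` is exactly `∑_{n=1}^N λ_n`. -/
theorem statement7 (N : ℕ) (hN : 1 ≤ N) (lam : ℕ → ℝ) (hlam : ∀ n, 0 ≤ lam n) :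
    sSup {r : ℝ | ∃ x : ℕ → ℝ, (Function.support x).Finite ∧ schreierTwoNorm x ≤ 1 ∧
        r = ∑' j, (∑ n ∈ Finset.Icc 1 N, lam n * schreierBlock n j) * x j} =
      ∑ n ∈ Finset.Icc 1 N, lam n := by
  have hmem : (∑ n ∈ Finset.Icc 1 N, lam n) ∈
      {r : ℝ | ∃ x : ℕ → ℝ, (Function.support x).Finite ∧ schreierTwoNorm x ≤ 1 ∧
        r = ∑' j, (∑ n ∈ Finset.Icc 1 N, lam n * schreierBlock n j) * x j} :=
    ⟨w N, w_support N, w_norm_le N, (w_tsum N lam).symm⟩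
  apply le_antisymm
  · apply csSup_le ⟨_, hmem⟩
    rintro r ⟨x, hfin, hnorm, rfl⟩
    exact elem_le N lam hlam x hfin hnorm
  · apply le_csSup
    · refine ⟨∑ n ∈ Finset.Icc 1 N, lam n, ?_⟩
      rintro r ⟨x, hfin, hnorm, rfl⟩
      exact elem_le N lam hlam x hfin hnorm
    · exact hmem
end

section
/- Define g_0 : ℕ → ℕ by g_0(k) = k + 1 and, recursively, g_{n+1}(k) = g_n^{(k)}(k), where g_n^{(k)} denotes the k-fold iterate of g_n. For m ≥ 3 let α(m) denote the unique integer i with g_i(2) ≤ m < g_{i+1}(2). Then for every n with α(n) ≥ 2 (and n ≥ 2), one has α(n^n) ≤ α(n) + 2; equivalently, if i ≥ 2 and n ≤ g_{i+1}(2), then n^n ≤ g_{i+2}(2). -/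
/-- The hierarchy of rapidly growing functions: `g 0 k = k + 1` and
`g (n+1) k = (g n)^[k] k`, the `k`-fold iterate of `g n` evaluated at `k`. -/
def ackHierarchy : ℕ → ℕ → ℕ
  | 0 => fun k => k + 1
  | n + 1 => fun k => (ackHierarchy n)^[k] k

namespace AckAux

local notation "g" => ackHierarchy

lemma g_succ (n k : ℕ) : g (n + 1) k = (g n)^[k] k := rfl

lemma iter_add_le (f : ℕ → ℕ) (hf : ∀ x, 1 ≤ x → x < f x) :
    ∀ m x, 1 ≤ x → x + m ≤ f^[m] x := by
  intro m
  induction m with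
  | zero => intro x hx; simp
  | succ m ih =>
    intro x hx
    rw [Function.iterate_succ_apply]
    have h1 : x + 1 ≤ f x := hf x hx
    have := ih (f x) (le_trans (by omega) h1)
    omega

lemma lt_g : ∀ n x, 1 ≤ x → x < g n x := by
  intro n
  induction n with
  | zero => intro x hx; simp [ackHierarchy]
  | succ n ih =>
    intro x hx
    rw [g_succ]
    have := iter_add_le (g n) ih x x hx
    omega

lemma le_iter (n m x : ℕ) (hx : 1 ≤ x) : x ≤ (g n)^[m] x := by
  have := iter_add_le (g n) (lt_g n) m x hx
  omega

lemma mono_g : ∀ n, Monotone (g n) := by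
  intro n
  induction n with
  | zero => intro a b hab; simpa [ackHierarchy] using hab
  | succ n ih =>
    intro a b hab
    rw [g_succ, g_succ]
    rcases Nat.eq_zero_or_pos b with hb | hb
    · have : a = 0 := by omega
      simp [this, hb]
    · have h1 : (g n)^[a] a ≤ (g n)^[a] b := ih.iterate a hab
      have h2 : (g n)^[a] b ≤ (g n)^[b] b := by
        have key : (g n)^[b - a] ((g n)^[a] b) = (g n)^[b] b := by
          rw [← Function.iterate_add_apply]
          congr 1
          omega
        rw [← key]
        exact le_iter n (b - a) _ (le_trans hb (le_iter n a b hb))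
      exact le_trans h1 h2

lemma g_le_succ (n k : ℕ) (hk : 1 ≤ k) : g n k ≤ g (n + 1) k := by
  rw [g_succ]
  obtain ⟨m, rfl⟩ := Nat.exists_eq_add_of_le hk
  rw [Nat.add_comm, Function.iterate_add_apply]
  have h1 : 1 ≤ (g n)^[1] (m + 1) := by
    have := lt_g n (m + 1) (by omega); simpa using by omega
  calc g n (m + 1) = (g n)^[1] (m + 1) := rfl
    _ ≤ (g n)^[m] ((g n)^[1] (m + 1)) := le_iter n m _ h1
  
lemma g_mono_idx (k : ℕ) (hk : 1 ≤ k) : Monotone (fun n => g n k) := by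
  apply monotone_nat_of_le_succ
  intro n
  exact g_le_succ n k hk

lemma g0_iter (m x : ℕ) : (g 0)^[m] x = x + m := by
  induction m with
  | zero => simp
  | succ m ih => rw [Function.iterate_succ_apply', ih]; simp [ackHierarchy]; omega

lemma g1_eq (k : ℕ) : g 1 k = 2 * k := by
  rw [g_succ, g0_iter]; omega

lemma g1_iter (m x : ℕ) : (g 1)^[m] x = x * 2 ^ m := by
  induction m with
  | zero => simp
  | succ m ih => rw [Function.iterate_succ_apply', ih, g1_eq, pow_succ]; ring

lemma g2_eq (k : ℕ) : g 2 k = k * 2 ^ k := by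
  rw [g_succ, g1_iter]

lemma g2_iter_ge (n : ℕ) (hn : 2 ≤ n) : ∀ m, n ^ (m + 1) ≤ (g 2)^[m] n := by
  intro m
  induction m with
  | zero => simp
  | succ m ih =>
    rw [Function.iterate_succ_apply', g2_eq]
    set y := (g 2)^[m] n with hy
    have hyn : n ≤ y := le_trans (le_trans (Nat.le_self_pow (by omega) n) ih) le_rfl
    have h2y : n ≤ 2 ^ y := by
      calc n ≤ 2 ^ n := (Nat.lt_two_pow_self (n := n)).le
        _ ≤ 2 ^ y := Nat.pow_le_pow_right (by norm_num) hyn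
    calc n ^ (m + 2) = n ^ (m + 1) * n := by ring
      _ ≤ y * n := Nat.mul_le_mul_right n ih
      _ ≤ y * 2 ^ y := Nat.mul_le_mul_left y h2y

lemma pow_le_g3 (n : ℕ) (hn : 2 ≤ n) : n ^ n ≤ g 3 n := by
  rw [g_succ]
  calc n ^ n ≤ n ^ (n + 1) := Nat.pow_le_pow_right (by omega) (by omega)
    _ ≤ (g 2)^[n] n := g2_iter_ge n hn n

lemma g_two_lt_succ (m : ℕ) : g m 2 < g (m + 1) 2 := by
  rw [g_succ]
  show g m 2 < (g m)^[2] 2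
  rw [show (2:ℕ) = 1 + 1 from rfl, Function.iterate_add_apply]
  simp only [Function.iterate_one]
  exact lt_g m (g m 2) (by have := lt_g m 2 (by omega); omega)

lemma g_two_strict_mono : StrictMono (fun m => g m 2) :=
  strictMono_nat_of_lt_succ g_two_lt_succ

lemma main1 (i n : ℕ) (hi : 2 ≤ i) (hn : n ≤ g (i + 1) 2) :
    n ^ n ≤ g (i + 2) 2 := by
  have hg2 : 2 < g (i + 2) 2 := lt_g (i + 2) 2 (by omega)
  by_cases h : 2 ≤ n
  · have h1 : n ^ n ≤ g 3 n := pow_le_g3 n h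
    have h2 : g 3 n ≤ g (i + 1) n := g_mono_idx n (by omega) (by omega)
    have h3 : g (i + 1) n ≤ g (i + 1) (g (i + 1) 2) := mono_g (i + 1) hn
    have h4 : g (i + 2) 2 = g (i + 1) (g (i + 1) 2) := by
      rw [g_succ (i + 1) 2]
      rw [show (2:ℕ) = 1 + 1 from rfl, Function.iterate_add_apply]
      simp
    omega
  · have : n ^ n ≤ 1 := by
      interval_cases n <;> simp
    omega

end AckAux

/-- If `i ≥ 2` and `n ≤ g (i+1) 2`, then `n^n ≤ g (i+2) 2`.  Equivalently,
in terms of the inverse-Ackermann function `α` (characterized by `g (α m) 2 ≤ m < g (α m + 1) 2`):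
for every `n ≥ 2` with `α n ≥ 2`, one has `α (n^n) ≤ α n + 2`. -/
theorem statement14 :
    (∀ i n : ℕ, 2 ≤ i → n ≤ ackHierarchy (i + 1) 2 → n ^ n ≤ ackHierarchy (i + 2) 2) ∧
      (∀ n i j : ℕ, 2 ≤ n → 2 ≤ i →
        ackHierarchy i 2 ≤ n → n < ackHierarchy (i + 1) 2 →
        ackHierarchy j 2 ≤ n ^ n → n ^ n < ackHierarchy (j + 1) 2 → j ≤ i + 2) := by
  refine ⟨AckAux.main1, ?_⟩
  intro n i j hn hi h1 h2 h3 h4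
  have hnn : n ^ n ≤ ackHierarchy (i + 2) 2 := AckAux.main1 i n hi h2.le
  by_contra hj
  push_neg at hj
  have : ackHierarchy (i + 3) 2 ≤ ackHierarchy j 2 :=
    (AckAux.g_two_strict_mono.le_iff_le).mpr (by omega)
  have hlt : ackHierarchy (i + 2) 2 < ackHierarchy (i + 3) 2 := AckAux.g_two_lt_succ (i + 2)
  omega
end
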